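/- For any complex numbers x, y, z with x ≠ 0 and any n ≥ 1, letting w = e^{2πi/n}, the product ∏_{k=0}^{n-1} (x - y w^{-k} + z w^{-2k}) equals x^n (1 - K^n - L^n + (z/x)^n), where K = (y - sqrt(y^2 - 4xz))/(2x) and L = (y + sqrt(y^2 - 4xz))/(2x), for any fixed choice of square root of y^2 - 4xz. -/

import Mathlib

open Finset Polynomial in
lemma prod_one_sub_mul_pow_primitive {n : ℕ} (hn : 0 < n) {ζ : ℂ}
    (hζ : IsPrimitiveRoot ζ n) (a : ℂ) :
    ∏ k ∈ Finset.range n, (1 - a * ζ ^ k) = 1 - a ^ n := by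
  have himg : nthRootsFinset n (1 : ℂ) = (Finset.range n).image (ζ ^ ·) := by
    apply Finset.eq_of_subset_of_card_le
    · intro μ hμ
      haveI : NeZero n := ⟨hn.ne'⟩
      obtain ⟨k, hk, rfl⟩ := hζ.eq_pow_of_pow_eq_one ((mem_nthRootsFinset hn 1).1 hμ)
      exact Finset.mem_image.2 ⟨k, Finset.mem_range.2 hk, rfl⟩
    · rw [hζ.card_nthRootsFinset, Finset.card_image_of_injOn]
      · simp
      · intro i hi j hj hij
        exact hζ.injOn_pow (by simpa using hi) (by simpa using hj) hij
  have := hζ.pow_sub_pow_eq_prod_sub_mul (1 : ℂ) a hn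
  rw [one_pow, himg, Finset.prod_image] at this
  · rw [this]
    exact Finset.prod_congr rfl fun k _ => by ring
  · intro i hi j hj hij
    exact hζ.injOn_pow (by simpa using hi) (by simpa using hj) hij

open Complex in
theorem prod_quadratic_roots_of_unity (x y z : ℂ) (hx : x ≠ 0)
    (n : ℕ) (hn : 1 ≤ n)
    (w : ℂ) (hw : w = Complex.exp (2 * Real.pi * I / n))
    (s : ℂ) (hs : s ^ 2 = y ^ 2 - 4 * x * z)
    (K L : ℂ) (hK : K = (y - s) / (2 * x)) (hL : L = (y + s) / (2 * x)) :
    ∏ k ∈ Finset.range n, (x - y * w ^ (-(k : ℤ)) + z * w ^ (-(2 * k : ℤ))) =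
      x ^ n * (1 - K ^ n - L ^ n + (z / x) ^ n) := by
  have hn0 : 0 < n := hn
  have hζ : IsPrimitiveRoot w n := by
    rw [hw]
    exact Complex.isPrimitiveRoot_exp n hn0.ne'
  have hw0 : w ≠ 0 := hζ.ne_zero hn0.ne'
  have hζi : IsPrimitiveRoot w⁻¹ n := hζ.inv
  have hsum : K + L = y / x := by
    rw [hK, hL]; field_simp; ring
  have hmul : K * L = z / x := by
    rw [hK, hL]
    have : (y - s) * (y + s) = 4 * x * z := by
      have : y ^ 2 - s ^ 2 = 4 * x * z := by rw [hs]; ring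
      linear_combination this
    field_simp
    linear_combination this
  have hfac : ∀ k ∈ Finset.range n,
      x - y * w ^ (-(k : ℤ)) + z * w ^ (-(2 * k : ℤ)) =
        x * ((1 - K * (w⁻¹) ^ k) * (1 - L * (w⁻¹) ^ k)) := by
    intro k _
    have h1 : w ^ (-(k : ℤ)) = (w⁻¹) ^ k := by
      rw [zpow_neg, zpow_natCast, inv_pow]
    have h2 : w ^ (-(2 * k : ℤ)) = ((w⁻¹) ^ k) ^ 2 := by
      rw [zpow_neg, ← zpow_natCast, ← zpow_natCast, ← inv_zpow]
      push_cast
      rw [← zpow_mul]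
      ring_nf
    rw [h1, h2]
    have : x * ((1 - K * (w⁻¹) ^ k) * (1 - L * (w⁻¹) ^ k)) =
        x - x * (K + L) * (w⁻¹) ^ k + x * (K * L) * ((w⁻¹) ^ k) ^ 2 := by ring
    rw [this, hsum, hmul, mul_div_cancel₀ _ hx, mul_div_cancel₀ _ hx]
  rw [Finset.prod_congr rfl hfac, Finset.prod_mul_distrib, Finset.prod_mul_distrib,
    Finset.prod_const, Finset.card_range,
    prod_one_sub_mul_pow_primitive hn0 hζi K,
    prod_one_sub_mul_pow_primitive hn0 hζi L,
    ← hmul]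
  ring
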